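/- For positive integers a, b, c, with A = a+b, B = a+c, C = b+c, m = a+b+c-2, the determinant of the middle multiplication matrix U_m on R = ℤ[x,y,z]/(x^A,y^B,z^C) equals ± its permanent; equivalently, all nonzero permutation terms in the expansion of det(U_m) have the same sign. -/

import Mathlib

open Matrix

/-- Monomials `x^i y^j z^k` of degree `s` nonzero in `ℤ[x,y,z]/(x^A,y^B,z^C)`. -/
def Mon (A B C s : ℕ) : Type :=
  {v : Fin A × Fin B × Fin C // (v.1 : ℕ) + (v.2.1 : ℕ) + (v.2.2 : ℕ) = s}

instance (A B C s : ℕ) : Fintype (Mon A B C s) := by unfold Mon; infer_instance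
instance (A B C s : ℕ) : DecidableEq (Mon A B C s) := by unfold Mon; infer_instance

/-- The matrix of multiplication by `x+y+z` in the monomial bases. -/
def Umat (A B C r : ℕ) : Matrix (Mon A B C (r+1)) (Mon A B C r) ℤ :=
  Matrix.of fun w v =>
    if (v.1.1 : ℕ) ≤ (w.1.1 : ℕ) ∧ (v.1.2.1 : ℕ) ≤ (w.1.2.1 : ℕ) ∧
        (v.1.2.2 : ℕ) ≤ (w.1.2.2 : ℕ) then (1 : ℤ) else 0

/-- The number of plane partitions fitting in an `a × b × c` box: weakly decreasing
arrays with at most `a` rows, `b` columns, entries at most `c`. -/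
def PPcount (a b c : ℕ) : ℕ :=
  Fintype.card {p : Fin a → Fin b → Fin (c + 1) //
    ∀ i i' j j', i ≤ i' → j ≤ j' → (p i' j' : ℕ) ≤ (p i j : ℕ)}

/-- The permanent of the (square) middle multiplication matrix `U_m`, as a sum over
bijections between the monomial bases. -/
noncomputable def permU (a b c : ℕ) : ℤ :=
  ∑ σ : Mon (a+b) (a+c) (b+c) (a+b+c-2) ≃ Mon (a+b) (a+c) (b+c) (a+b+c-2+1),
    ∏ v, Umat (a+b) (a+c) (b+c) (a+b+c-2) (σ v) v

namespace S10

open Finset Equiv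

/-! ### Sign of a bijection versus inversion counts -/

theorem signAux_eq_sign : ∀ {n : ℕ} (f : Equiv.Perm (Fin n)),
    Equiv.Perm.signAux f = Equiv.Perm.sign f
  | 0, f => by
    have : f = 1 := Equiv.ext fun x => x.elim0
    subst this; simp [Equiv.Perm.signAux_one]
  | 1, f => by
    have : f = 1 := Equiv.ext fun x => Subsingleton.elim _ _
    subst this; simp [Equiv.Perm.signAux_one]
  | (n+2), f => by
    have hsurj : Function.Surjective
        (MonoidHom.mk' (Equiv.Perm.signAux (n := n+2)) Equiv.Perm.signAux_mul) := by
      intro u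
      rcases Int.units_eq_one_or u with rfl | rfl
      · exact ⟨1, Equiv.Perm.signAux_one _⟩
      · exact ⟨Equiv.swap 0 1,
          Equiv.Perm.signAux_swap (x := (0 : Fin (n+2))) (y := 1) (by simp [Fin.ext_iff])⟩
    have := Equiv.Perm.eq_sign_of_surjective_hom hsurj
    exact congrFun (congrArg (fun g => g.toFun) this) f

/-- Inversion count of a bijection w.r.t. injective ℕ-keys. -/
def invCount {α β : Type*} [Fintype α] [DecidableEq α] (f : α ≃ β)
    (ka : α → ℕ) (kb : β → ℕ) : ℕ :=
  (Finset.univ.filter fun pq : α × α =>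
    ka pq.1 < ka pq.2 ∧ kb (f pq.2) < kb (f pq.1)).card

section Bridge
variable {α β : Type*} [Fintype α] [DecidableEq α] [Fintype β] [DecidableEq β]

/-- an order-reflecting identification with `Fin n` -/
noncomputable def keyIso (ka : α → ℕ) (ha : Function.Injective ka) {n : ℕ}
    (hn : Fintype.card α = n) : α ≃ Fin n :=
  (Equiv.ofBijective (fun a => (⟨ka a, Finset.mem_image_of_mem _ (Finset.mem_univ a)⟩ :
      {x // x ∈ Finset.univ.image ka}))
    ⟨fun a b h => ha (congrArg Subtype.val h), by
      rintro ⟨x, hx⟩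
      rcases Finset.mem_image.1 hx with ⟨a, -, rfl⟩
      exact ⟨a, rfl⟩⟩).trans
  ((Finset.univ.image ka).orderIsoOfFin
    (by rw [Finset.card_image_of_injective _ ha, Finset.card_univ, hn])).symm.toEquiv

theorem keyIso_lt_iff (ka : α → ℕ) (ha : Function.Injective ka) {n : ℕ}
    (hn : Fintype.card α = n) (x y : α) :
    keyIso ka ha hn x < keyIso ka ha hn y ↔ ka x < ka y := by
  rw [keyIso]
  simp only [Equiv.trans_apply, RelIso.coe_fn_toEquiv]
  rw [(Finset.univ.image ka).orderIsoOfFin _ |>.symm.lt_iff_lt]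
  rfl

theorem sign_eq_of_invCount (f g : α ≃ β) (ka : α → ℕ) (kb : β → ℕ)
    (ha : Function.Injective ka) (hb : Function.Injective kb)
    (h : invCount f ka kb = invCount g ka kb) :
    Equiv.Perm.sign (f.trans g.symm) = 1 := by
  set n := Fintype.card α with hn
  have hcb : Fintype.card β = n := by rw [hn]; exact (Fintype.card_congr f).symm
  set oA := keyIso ka ha rfl with hoA
  set oB := keyIso kb hb hcb with hoB
  have hAlt := keyIso_lt_iff ka ha (n := n) rfl
  have hBlt := keyIso_lt_iff kb hb hcb
  set F : Equiv.Perm (Fin n) := (oA.symm.trans f).trans oB with hF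
  set G : Equiv.Perm (Fin n) := (oA.symm.trans g).trans oB with hG
  have hconj : ((oA.symm.trans (f.trans g.symm)).trans oA) = F.trans G.symm := by
    ext x; simp [hF, hG]
  have hsign : Equiv.Perm.sign (f.trans g.symm) = Equiv.Perm.sign (F.trans G.symm) := by
    rw [← hconj, Equiv.Perm.sign_symm_trans_trans]
  have count : ∀ (u : α ≃ β) (U : Equiv.Perm (Fin n)), U = (oA.symm.trans u).trans oB →
      ((Equiv.Perm.finPairsLT n).filter fun x => U x.1 ≤ U x.2).card = invCount u ka kb := by
    intro u U hU
    apply Finset.card_nbij' (i := fun x => (oA.symm x.2, oA.symm x.1))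
      (j := fun pq => ⟨oA pq.2, oA pq.1⟩)
    · intro x hx
      simp only [Finset.mem_coe, Finset.mem_filter, Equiv.Perm.mem_finPairsLT] at hx ⊢
      obtain ⟨hlt, hle⟩ := hx
      refine ⟨Finset.mem_univ _, ?_, ?_⟩
      · rw [← hAlt, ← hoA]; simpa using hlt
      · have hne : U x.1 ≠ U x.2 := fun hh => absurd (U.injective hh) (ne_of_gt hlt)
        have : U x.1 < U x.2 := lt_of_le_of_ne hle hne
        rw [← hBlt]
        simpa [hU] using this
    · intro pq hpq
      simp only [Finset.mem_coe, Finset.mem_filter, Finset.mem_univ, true_and] at hpq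
      simp only [Finset.mem_coe, Finset.mem_filter, Equiv.Perm.mem_finPairsLT]
      constructor
      · rw [hAlt]; exact hpq.1
      · rw [hU]
        simp only [Equiv.trans_apply, Equiv.symm_apply_apply]
        rw [← hBlt] at hpq
        exact le_of_lt hpq.2
    · intro x hx; simp
    · intro pq hpq; simp
  have expand : ∀ (U : Equiv.Perm (Fin n)),
      Equiv.Perm.signAux U =
        (-1 : ℤˣ) ^ ((Equiv.Perm.finPairsLT n).filter fun x => U x.1 ≤ U x.2).card := by
    intro U
    rw [Equiv.Perm.signAux, Finset.prod_ite, Finset.prod_const, Finset.prod_const_one, mul_one]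
  have hFG : F.trans G.symm = G⁻¹ * F := rfl
  rw [hsign, ← signAux_eq_sign, hFG, Equiv.Perm.signAux_mul, Equiv.Perm.signAux_inv G,
    expand F, expand G, count f F hF, count g G hG, h]
  rw [← mul_pow]
  norm_num

end Bridge

/-! ### Monomial coordinates -/

variable {A B C : ℕ}

def vi {s : ℕ} (v : Mon A B C s) : ℕ := v.1.1
def vj {s : ℕ} (v : Mon A B C s) : ℕ := v.1.2.1
def vk {s : ℕ} (v : Mon A B C s) : ℕ := v.1.2.2

theorem vsum {s : ℕ} (v : Mon A B C s) : vi v + vj v + vk v = s := v.2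
theorem viA {s : ℕ} (v : Mon A B C s) : vi v < A := v.1.1.isLt
theorem vjB {s : ℕ} (v : Mon A B C s) : vj v < B := v.1.2.1.isLt
theorem vkC {s : ℕ} (v : Mon A B C s) : vk v < C := v.1.2.2.isLt

theorem mext {s : ℕ} {u v : Mon A B C s} (hi : vi u = vi v) (hk : vk u = vk v) : u = v := by
  have hj : vj u = vj v := by have := vsum u; have := vsum v; omega
  apply Subtype.ext
  apply Prod.ext (Fin.ext hi)
  exact Prod.ext (Fin.ext hj) (Fin.ext hk)

def mk' {s : ℕ} (i j kk : ℕ) (hi : i < A) (hj : j < B) (hkk : kk < C)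
    (h : i + j + kk = s) : Mon A B C s := ⟨(⟨i, hi⟩, ⟨j, hj⟩, ⟨kk, hkk⟩), h⟩
@[simp] theorem vi_mk' {s i j kk hi hj hkk h} :
    vi (mk' (A := A) (B := B) (C := C) (s := s) i j kk hi hj hkk h) = i := rfl
@[simp] theorem vj_mk' {s i j kk hi hj hkk h} :
    vj (mk' (A := A) (B := B) (C := C) (s := s) i j kk hi hj hkk h) = j := rfl
@[simp] theorem vk_mk' {s i j kk hi hj hkk h} :
    vk (mk' (A := A) (B := B) (C := C) (s := s) i j kk hi hj hkk h) = kk := rfl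

def mkey {s : ℕ} (v : Mon A B C s) : ℕ := vk v * A + vi v

theorem mkey_inj {s : ℕ} : Function.Injective (mkey (A := A) (B := B) (C := C) (s := s)) := by
  intro u v h
  have hu := viA u; have hv := viA v
  unfold mkey at h
  have hA : 0 < A := Nat.lt_of_le_of_lt (Nat.zero_le _) hu
  have hk : vk u = vk v := by
    have h2 := congrArg (· / A) h
    rwa [Nat.add_comm (vk u * A), Nat.add_comm (vk v * A), Nat.mul_comm (vk u) A,
      Nat.mul_comm (vk v) A, Nat.add_mul_div_left _ _ hA, Nat.add_mul_div_left _ _ hA,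
      Nat.div_eq_of_lt hu, Nat.div_eq_of_lt hv, Nat.zero_add, Nat.zero_add] at h2
  rw [hk] at h
  exact mext (by omega) hk

theorem key_lt_iff {s t : ℕ} (u : Mon A B C s) (v : Mon A B C t) :
    mkey u < mkey v ↔ (vk u < vk v ∨ (vk u = vk v ∧ vi u < vi v)) := by
  have hlt : ∀ {s' t' : ℕ} (x : Mon A B C s') (y : Mon A B C t'),
      vk x < vk y → mkey x < mkey y := by
    intro s' t' x y h
    calc vk x * A + vi x < vk x * A + A := by have := viA x; omega
      _ = (vk x + 1) * A := by ring
      _ ≤ vk y * A := Nat.mul_le_mul_right A h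
      _ ≤ vk y * A + vi y := Nat.le_add_right _ _
  rcases Nat.lt_trichotomy (vk u) (vk v) with h | h | h
  · simp only [h, true_or, iff_true]; exact hlt u v h
  · unfold mkey
    rw [h]
    have : ∀ m n n' : ℕ, m + n < m + n' ↔ n < n' := by intro m n n'; omega
    rw [this]
    omega
  · have := hlt v u h
    unfold mkey at *
    constructor
    · intro h2; omega
    · intro h2; omega

/-! ### Admissible bijections -/

variable {r : ℕ}

/-- admissibility: each monomial maps to itself times a variable. -/
def Adm (σ : Mon A B C r ≃ Mon A B C (r+1)) : Prop :=
  ∀ v, vi v ≤ vi (σ v) ∧ vj v ≤ vj (σ v) ∧ vk v ≤ vk (σ v)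

theorem step {σ : Mon A B C r ≃ Mon A B C (r+1)} (hσ : Adm σ) (v : Mon A B C r) :
    (vi (σ v) = vi v + 1 ∧ vk (σ v) = vk v) ∨
    (vi (σ v) = vi v ∧ vk (σ v) = vk v) ∨
    (vi (σ v) = vi v ∧ vk (σ v) = vk v + 1) := by
  have h := hσ v
  have h1 := vsum v; have h2 := vsum (σ v)
  omega

theorem card_split {γ : Type*} [Fintype γ] [DecidableEq γ]
    (P Q1 Q2 : γ → Prop) [DecidablePred P] [DecidablePred Q1] [DecidablePred Q2]
    (hiff : ∀ x, P x ↔ Q1 x ∨ Q2 x) (hdisj : ∀ x, Q1 x → Q2 x → False) :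
    (univ.filter P).card = (univ.filter Q1).card + (univ.filter Q2).card := by
  have hd : Disjoint (univ.filter Q1) (univ.filter Q2) := by
    rw [Finset.disjoint_left]
    intro x h1 h2
    rw [Finset.mem_filter] at h1 h2
    exact hdisj x h1.2 h2.2
  rw [← Finset.card_union_of_disjoint hd, ← Finset.filter_or]
  exact congrArg Finset.card (Finset.filter_congr fun x _ => hiff x)

theorem card_split3 {γ : Type*} [Fintype γ] [DecidableEq γ]
    (P Q1 Q2 Q3 : γ → Prop) [DecidablePred P] [DecidablePred Q1] [DecidablePred Q2]
    [DecidablePred Q3]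
    (hiff : ∀ x, P x ↔ Q1 x ∨ Q2 x ∨ Q3 x)
    (d12 : ∀ x, Q1 x → Q2 x → False) (d13 : ∀ x, Q1 x → Q3 x → False)
    (d23 : ∀ x, Q2 x → Q3 x → False) :
    (univ.filter P).card =
      (univ.filter Q1).card + (univ.filter Q2).card + (univ.filter Q3).card := by
  rw [card_split P Q1 (fun x => Q2 x ∨ Q3 x) hiff
      (fun x h1 h2 => h2.elim (d12 x h1) (d13 x h1)),
    card_split (fun x => Q2 x ∨ Q3 x) Q2 Q3 (fun x => Iff.rfl) d23]
  ring

section Counting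
variable (σ : Mon A B C r ≃ Mon A B C (r+1))

def Zc (k : ℕ) : Finset (Mon A B C r) :=
  univ.filter fun p => vk p = k ∧ vk (σ p) = vk p + 1
def NZc (k : ℕ) : Finset (Mon A B C r) :=
  univ.filter fun p => vk p = k ∧ vk (σ p) = vk p

variable {σ}

theorem lev_split (hσ : Adm σ) (k : ℕ) :
    (univ.filter fun p : Mon A B C r => vk p = k).card = (Zc σ k).card + (NZc σ k).card := by
  have hd : Disjoint (Zc σ k) (NZc σ k) := by
    rw [Finset.disjoint_left]
    intro p h1 h2
    rw [Zc, Finset.mem_filter] at h1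
    rw [NZc, Finset.mem_filter] at h2
    omega
  rw [← Finset.card_union_of_disjoint hd, Zc, NZc, ← Finset.filter_or]
  apply congrArg Finset.card
  apply Finset.filter_congr
  intro p _
  have := step hσ p
  omega

theorem lev_image (k : ℕ) :
    (univ.filter fun w : Mon A B C (r+1) => vk w = k).card =
    (univ.filter fun p : Mon A B C r => vk (σ p) = k).card := by
  apply Finset.card_nbij' (i := fun w => σ.symm w) (j := fun p => σ p) <;>
    intro x hx <;> simp only [Finset.coe_filter, Set.mem_setOf_eq, Finset.mem_filter, Finset.mem_univ, true_and] at * <;> simp [hx]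

theorem lev_image0 (hσ : Adm σ) :
    (univ.filter fun p : Mon A B C r => vk (σ p) = 0) = NZc σ 0 := by
  rw [NZc]; apply Finset.filter_congr; intro p _
  have := step hσ p; constructor <;> intro h <;> omega

theorem lev_image_succ (hσ : Adm σ) (k : ℕ) :
    (univ.filter fun p : Mon A B C r => vk (σ p) = k + 1).card =
    (Zc σ k).card + (NZc σ (k+1)).card := by
  have hd : Disjoint (Zc σ k) (NZc σ (k+1)) := by
    rw [Finset.disjoint_left]
    intro p h1 h2
    rw [Zc, Finset.mem_filter] at h1
    rw [NZc, Finset.mem_filter] at h2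
    omega
  rw [← Finset.card_union_of_disjoint hd, Zc, NZc, ← Finset.filter_or]
  apply congrArg Finset.card
  apply Finset.filter_congr
  intro p _
  have := step hσ p
  omega

theorem zc_card_eq {σ' : Mon A B C r ≃ Mon A B C (r+1)} (hσ : Adm σ) (hσ' : Adm σ') :
    ∀ k, (Zc σ k).card = (Zc σ' k).card ∧ (NZc σ k).card = (NZc σ' k).card := by
  intro k
  induction k with
  | zero =>
    have h1 : (NZc σ 0).card = (NZc σ' 0).card := by
      rw [← lev_image0 hσ, ← lev_image0 hσ', ← lev_image (σ := σ), ← lev_image (σ := σ')]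
    have h2 := lev_split hσ 0
    have h3 := lev_split hσ' 0
    omega
  | succ k ih =>
    have h1 : (Zc σ k).card + (NZc σ (k+1)).card = (Zc σ' k).card + (NZc σ' (k+1)).card := by
      rw [← lev_image_succ hσ, ← lev_image_succ hσ', ← lev_image (σ := σ), ← lev_image (σ := σ')]
    have h2 := lev_split hσ (k+1)
    have h3 := lev_split hσ' (k+1)
    omega

theorem invchar (hσ : Adm σ) (q p : Mon A B C r) :
    (mkey q < mkey p ∧ mkey (σ p) < mkey (σ q)) ↔
    (vk (σ q) = vk q + 1 ∧ ¬(vk (σ p) = vk p + 1) ∧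
      ((vk p = vk q ∧ vi q < vi p) ∨ (vk p = vk q + 1 ∧ vi (σ p) < vi q))) := by
  rw [key_lt_iff, key_lt_iff]
  have hp := step hσ p
  have hq := step hσ q
  have hiA := viA p; have hiA2 := viA q; have hiA3 := viA (σ p); have hiA4 := viA (σ q)
  have hinj : (vi p = vi q ∧ vk p = vk q) ∨
      ¬(vi (σ p) = vi (σ q) ∧ vk (σ p) = vk (σ q)) := by
    by_cases h : p = q
    · left; rw [h]; exact ⟨rfl, rfl⟩
    · right; intro hc; exact h (σ.injective (mext hc.1 hc.2))
  omega

theorem per_q (hσ : Adm σ) (q : Mon A B C r) (hq : vk (σ q) = vk q + 1) :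
    (univ.filter fun p : Mon A B C r => ¬(vk (σ p) = vk p + 1) ∧
      ((vk p = vk q ∧ vi q < vi p) ∨ (vk p = vk q + 1 ∧ vi (σ p) < vi q))).card
    = (NZc σ (vk q)).card := by
  set k := vk q with hk
  set i0 := vi q with hi0
  have hkC : k + 1 < C := by have := vkC (σ q); omega
  have hsplit : (univ.filter fun p : Mon A B C r => ¬(vk (σ p) = vk p + 1) ∧
      ((vk p = k ∧ i0 < vi p) ∨ (vk p = k + 1 ∧ vi (σ p) < i0))).card
      = (univ.filter fun p : Mon A B C r =>
          ¬(vk (σ p) = vk p + 1) ∧ vk p = k ∧ i0 < vi p).card +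
        (univ.filter fun p : Mon A B C r =>
          ¬(vk (σ p) = vk p + 1) ∧ vk p = k + 1 ∧ vi (σ p) < i0).card := by
    apply card_split
    · intro p; constructor
      · rintro ⟨h1, h2 | h2⟩
        exacts [Or.inl ⟨h1, h2⟩, Or.inr ⟨h1, h2⟩]
      · rintro (⟨h1, h2⟩ | ⟨h1, h2⟩)
        exacts [⟨h1, Or.inl h2⟩, ⟨h1, Or.inr h2⟩]
    · intro p h1 h2; omega
  have hb : (univ.filter fun p : Mon A B C r => vk p = k ∧ i0 < vi p).card
      = (univ.filter fun p : Mon A B C r =>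
          ¬(vk (σ p) = vk p + 1) ∧ vk p = k ∧ i0 < vi p).card +
        (univ.filter fun p : Mon A B C r =>
          vk (σ p) = vk p + 1 ∧ vk p = k ∧ i0 < vi p).card := by
    apply card_split
    · intro p; constructor
      · intro h; by_cases hz : vk (σ p) = vk p + 1
        exacts [Or.inr ⟨hz, h⟩, Or.inl ⟨hz, h⟩]
      · rintro (⟨h1, h2⟩ | ⟨h1, h2⟩) <;> exact h2
    · intro p h1 h2; exact h1.1 h2.1
  have hc : (univ.filter fun p : Mon A B C r =>
        vk (σ p) = k + 1 ∧ vi (σ p) < i0).card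
      = (univ.filter fun p : Mon A B C r =>
          vk (σ p) = vk p + 1 ∧ vk p = k ∧ vi p < i0).card +
        (univ.filter fun p : Mon A B C r =>
          ¬(vk (σ p) = vk p + 1) ∧ vk p = k + 1 ∧ vi (σ p) < i0).card := by
    apply card_split
    · intro p
      have hp := step hσ p
      omega
    · intro p h1 h2; omega
  have hcd : (univ.filter fun p : Mon A B C r =>
        vk (σ p) = k + 1 ∧ vi (σ p) < i0).card
      = (univ.filter fun p : Mon A B C r => vk p = k ∧ vi p < i0).card := by
    have h1 : (univ.filter fun p : Mon A B C r =>
          vk (σ p) = k + 1 ∧ vi (σ p) < i0).card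
        = (univ.filter fun w : Mon A B C (r+1) => vk w = k + 1 ∧ vi w < i0).card := by
      apply Finset.card_nbij' (i := fun p => σ p) (j := fun w => σ.symm w) <;>
        intro x hx <;> simp only [Finset.coe_filter, Set.mem_setOf_eq, Finset.mem_filter, Finset.mem_univ, true_and] at * <;>
        simp [hx]
    rw [h1]
    apply Finset.card_bij'
      (i := fun w hw => mk' (vi w) (vj w) k (viA w) (vjB w) (Nat.lt_of_succ_lt hkC)
        (by
          have h2 := vsum w
          have h3 := (Finset.mem_filter.1 hw).2.1
          omega))
      (j := fun p hp => mk' (vi p) (vj p) (k+1) (viA p) (vjB p) hkC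
        (by
          have h2 := vsum p
          have h3 := (Finset.mem_filter.1 hp).2.1
          omega))
    case hi =>
      intro w hw
      simp only [Finset.mem_filter, Finset.mem_univ, true_and] at hw ⊢
      simp [hw.2, vi_mk', vk_mk']
    case hj =>
      intro p hp
      simp only [Finset.mem_filter, Finset.mem_univ, true_and] at hp ⊢
      simp [hp.2, vi_mk', vk_mk']
    case left_inv =>
      intro w hw
      apply mext <;> simp [(Finset.mem_filter.1 hw).2.1, vi_mk', vk_mk']
    case right_inv =>
      intro p hp
      apply mext <;> simp [(Finset.mem_filter.1 hp).2.1, vi_mk', vk_mk']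
  have he : (univ.filter fun p : Mon A B C r => vk p = k).card
      = (univ.filter fun p : Mon A B C r => vk p = k ∧ vi p < i0).card +
        (univ.filter fun p : Mon A B C r => vk p = k ∧ vi p = i0).card +
        (univ.filter fun p : Mon A B C r => vk p = k ∧ i0 < vi p).card := by
    apply card_split3
    · intro p; omega
    all_goals intro p h1 h2; omega
  have hmid : (univ.filter fun p : Mon A B C r => vk p = k ∧ vi p = i0) = {q} := by
    ext p
    simp only [Finset.mem_filter, Finset.mem_univ, true_and, Finset.mem_singleton]
    constructor
    · rintro ⟨h3, h4⟩; exact mext (by omega) (by omega)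
    · rintro rfl; exact ⟨rfl, rfl⟩
  have hf : (Zc σ k).card
      = (univ.filter fun p : Mon A B C r =>
          vk (σ p) = vk p + 1 ∧ vk p = k ∧ vi p < i0).card +
        (univ.filter fun p : Mon A B C r =>
          vk (σ p) = vk p + 1 ∧ vk p = k ∧ vi p = i0).card +
        (univ.filter fun p : Mon A B C r =>
          vk (σ p) = vk p + 1 ∧ vk p = k ∧ i0 < vi p).card := by
    rw [Zc]
    apply card_split3
    · intro p; omega
    all_goals intro p h1 h2; omega
  have hmidz : (univ.filter fun p : Mon A B C r =>
      vk (σ p) = vk p + 1 ∧ vk p = k ∧ vi p = i0) = {q} := by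
    ext p
    simp only [Finset.mem_filter, Finset.mem_univ, true_and, Finset.mem_singleton]
    constructor
    · rintro ⟨h2, h3, h4⟩; exact mext (by omega) (by omega)
    · rintro rfl; exact ⟨hq, rfl, rfl⟩
  have hlev := lev_split hσ k
  rw [hmid] at he
  rw [hmidz] at hf
  simp only [Finset.card_singleton] at he hf
  omega

theorem invCount_formula (hσ : Adm σ) :
    invCount σ mkey mkey = ∑ k ∈ Finset.range C, (Zc σ k).card * (NZc σ k).card := by
  rw [invCount, Finset.card_filter, Fintype.sum_prod_type]
  have h1 : ∀ q : Mon A B C r,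
      (∑ p : Mon A B C r, if (mkey q < mkey p ∧ mkey (σ p) < mkey (σ q)) then 1 else 0)
      = if vk (σ q) = vk q + 1 then (NZc σ (vk q)).card else 0 := by
    intro q
    rw [← Finset.card_filter]
    by_cases hq : vk (σ q) = vk q + 1
    · rw [if_pos hq, ← per_q hσ q hq]
      apply congrArg Finset.card
      apply Finset.filter_congr
      intro p _
      rw [invchar hσ]
      simp [hq]
    · rw [if_neg hq, Finset.card_eq_zero, Finset.filter_eq_empty_iff]
      intro p _
      rw [invchar hσ]
      intro hcon
      exact hq hcon.1
  rw [Finset.sum_congr rfl fun q _ => h1 q]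
  rw [← Finset.sum_filter]
  have hmaps : ∀ q ∈ univ.filter (fun q : Mon A B C r => vk (σ q) = vk q + 1),
      vk q ∈ Finset.range C := fun q _ => Finset.mem_range.2 (vkC q)
  rw [← Finset.sum_fiberwise_of_maps_to hmaps (fun q => (NZc σ (vk q)).card)]
  apply Finset.sum_congr rfl
  intro k hk
  have hZ : (univ.filter (fun q : Mon A B C r => vk (σ q) = vk q + 1)).filter
      (fun q => vk q = k) = Zc σ k := by
    rw [Zc, Finset.filter_filter]
    apply Finset.filter_congr
    intro p _
    constructor
    · rintro ⟨h1, h2⟩; exact ⟨h2, h1⟩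
    · rintro ⟨h1, h2⟩; exact ⟨h2, h1⟩
  calc ∑ q ∈ (univ.filter (fun q : Mon A B C r => vk (σ q) = vk q + 1)).filter
        (fun q => vk q = k), (NZc σ (vk q)).card
      = ∑ q ∈ (univ.filter (fun q : Mon A B C r => vk (σ q) = vk q + 1)).filter
        (fun q => vk q = k), (NZc σ k).card := by
        apply Finset.sum_congr rfl
        intro q hq
        rw [(Finset.mem_filter.1 hq).2]
    _ = (Zc σ k).card * (NZc σ k).card := by
        rw [Finset.sum_const, hZ, smul_eq_mul]

theorem invCount_eq {σ' : Mon A B C r ≃ Mon A B C (r+1)} (hσ : Adm σ) (hσ' : Adm σ') :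
    invCount σ mkey mkey = invCount σ' mkey mkey := by
  rw [invCount_formula hσ, invCount_formula hσ']
  apply Finset.sum_congr rfl
  intro k _
  rw [(zc_card_eq hσ hσ' k).1, (zc_card_eq hσ hσ' k).2]

end Counting

theorem adm_sign_eq {A B C r : ℕ} {σ σ' : Mon A B C r ≃ Mon A B C (r+1)}
    (hσ : Adm σ) (hσ' : Adm σ') : Equiv.Perm.sign (σ.trans σ'.symm) = 1 :=
  sign_eq_of_invCount σ σ' mkey mkey mkey_inj mkey_inj (invCount_eq hσ hσ')

theorem main_gen {A B C r : ℕ} (e : Mon A B C r ≃ Mon A B C (r+1)) :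
    ((Umat A B C r).submatrix e id).det =
      (∑ σ : Mon A B C r ≃ Mon A B C (r+1), ∏ v, Umat A B C r (σ v) v) ∨
    ((Umat A B C r).submatrix e id).det =
      -(∑ σ : Mon A B C r ≃ Mon A B C (r+1), ∏ v, Umat A B C r (σ v) v) := by
  classical
  set P : Equiv.Perm (Mon A B C r) → ℤ := fun τ => ∏ v, Umat A B C r (e (τ v)) v with hP
  have hdet0 : ((Umat A B C r).submatrix e id).det
      = ∑ τ : Equiv.Perm (Mon A B C r), Equiv.Perm.sign τ • P τ := by
    rw [Matrix.det_apply]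
    apply Finset.sum_congr rfl
    intro τ _
    rfl
  have hreindex : (∑ σ : Mon A B C r ≃ Mon A B C (r+1), ∏ v, Umat A B C r (σ v) v)
      = ∑ τ : Equiv.Perm (Mon A B C r), P τ := by
    refine Fintype.sum_equiv
      ⟨fun σ => σ.trans e.symm, fun τ => τ.trans e,
        fun σ => by ext x; simp, fun τ => by ext x; simp⟩ _ _ ?_
    intro σ
    apply Finset.prod_congr rfl
    intro v _
    simp [hP]
  have hAdm : ∀ τ, P τ ≠ 0 → Adm (τ.trans e) := by
    intro τ h v
    have h2 := Finset.prod_ne_zero_iff.1 h v (Finset.mem_univ v)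
    rw [Umat, Matrix.of_apply] at h2
    by_cases hc : (v.1.1 : ℕ) ≤ ((e (τ v)).1.1 : ℕ) ∧ (v.1.2.1 : ℕ) ≤ ((e (τ v)).1.2.1 : ℕ) ∧
        (v.1.2.2 : ℕ) ≤ ((e (τ v)).1.2.2 : ℕ)
    · exact hc
    · rw [if_neg hc] at h2; exact absurd rfl h2
  by_cases hex : ∃ τ : Equiv.Perm (Mon A B C r), P τ ≠ 0
  · obtain ⟨τ0, h0⟩ := hex
    have hsign : ∀ τ, P τ ≠ 0 → Equiv.Perm.sign τ = Equiv.Perm.sign τ0 := by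
      intro τ h
      have k1 := adm_sign_eq (hAdm τ h) (hAdm τ0 h0)
      have hcomp : (τ.trans e).trans ((τ0.trans e).symm) = τ0⁻¹ * τ := by
        ext x
        simp [Equiv.Perm.mul_apply, Equiv.Perm.inv_def]
      rw [hcomp, _root_.map_mul, Equiv.Perm.sign_inv] at k1
      exact mul_left_cancel (k1.trans (Int.units_mul_self _).symm)
    have hdet : ((Umat A B C r).submatrix e id).det
        = (Equiv.Perm.sign τ0 : ℤ) * ∑ τ : Equiv.Perm (Mon A B C r), P τ := by
      rw [hdet0, Finset.mul_sum]
      apply Finset.sum_congr rfl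
      intro τ _
      by_cases h : P τ = 0
      · rw [h]; simp
      · rw [hsign τ h, Units.smul_def]
        rfl
    rcases Int.units_eq_one_or (Equiv.Perm.sign τ0) with hε | hε
    · left; rw [hdet, hε, hreindex]; simp
    · right; rw [hdet, hε, hreindex]; simp
  · push_neg at hex
    left
    rw [hdet0, hreindex]
    apply Finset.sum_congr rfl
    intro τ _
    rw [hex τ]
    simp

end S10

/-- The determinant of the middle multiplication matrix `U_m` (with respect to any
identification of the two monomial bases) equals `±` its permanent. -/
theorem stmt10 (a b c : ℕ) (ha : 1 ≤ a) (hb : 1 ≤ b) (hc : 1 ≤ c)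
    (e : Mon (a+b) (a+c) (b+c) (a+b+c-2) ≃ Mon (a+b) (a+c) (b+c) (a+b+c-2+1)) :
    ((Umat (a+b) (a+c) (b+c) (a+b+c-2)).submatrix e id).det = permU a b c ∨
    ((Umat (a+b) (a+c) (b+c) (a+b+c-2)).submatrix e id).det = -permU a b c := by
  rcases S10.main_gen e with h | h
  · left; exact h
  · right; exact h
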